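/- Let d, m ≥ 1, N ≥ 1, let h_1, …, h_N ∈ ℝ^d, and let r_1, …, r_N > 0 satisfy r_{n+1} ≥ 5 r_n for n = 1, …, N−1. For each n ∈ {1, …, N} let R_n be a map sending functions ℝ^d → ℝ^m to functions ℝ^d → ℝ^m such that, for every function φ : ℝ^d → ℝ^m: (a) R_n[φ] is constant on the open ball B_{r_n}(h_n); (b) R_n[φ](x) = φ(x) for every x with |x − h_n| > 2 r_n; (c) if φ is constant on B_{2 r_n}(h_n), then R_n[φ] = φ on all of ℝ^d. Then for every function φ : ℝ^d → ℝ^m and every i ∈ {1, …, N}, the composition (R_1 ∘ R_2 ∘ ⋯ ∘ R_N)[φ] is constant on the open ball B_{r_1}(h_i); that is, there are constant vectors Λ_1, …, Λ_N ∈ ℝ^m with (R_1 ∘ ⋯ ∘ R_N)[φ] = Λ_i on B_{r_1}(h_i) for each i. -/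
import Mathlib

open Metric

def compAll {α : Type*} : (n : ℕ) → (Fin n → (α → α)) → (α → α)
  | 0, _ => id
  | n + 1, F => F 0 ∘ compAll n (fun i => F i.succ)

theorem compAll_aux (d m : ℕ) :
    ∀ (N : ℕ) (h : Fin N → EuclideanSpace ℝ (Fin d))
      (r : Fin N → ℝ), (∀ n, 0 < r n) →
    ∀ (hr5 : ∀ n : Fin N, ∀ hn : (n : ℕ) + 1 < N, 5 * r n ≤ r ⟨(n : ℕ) + 1, hn⟩)
      (R : Fin N →
        (EuclideanSpace ℝ (Fin d) → EuclideanSpace ℝ (Fin m)) →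
        (EuclideanSpace ℝ (Fin d) → EuclideanSpace ℝ (Fin m)))
      (ha : ∀ (n : Fin N) (φ : EuclideanSpace ℝ (Fin d) → EuclideanSpace ℝ (Fin m)),
        ∃ Λ, ∀ x ∈ ball (h n) (r n), R n φ x = Λ)
      (hb : ∀ (n : Fin N) (φ : EuclideanSpace ℝ (Fin d) → EuclideanSpace ℝ (Fin m))
        (x : EuclideanSpace ℝ (Fin d)), 2 * r n < ‖x - h n‖ → R n φ x = φ x)
      (hc : ∀ (n : Fin N) (φ : EuclideanSpace ℝ (Fin d) → EuclideanSpace ℝ (Fin m)),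
        (∃ v, ∀ x ∈ ball (h n) (2 * r n), φ x = v) → R n φ = φ)
      (φ : EuclideanSpace ℝ (Fin d) → EuclideanSpace ℝ (Fin m)) (i : Fin N),
      ∃ Λ : EuclideanSpace ℝ (Fin m),
        ∀ x ∈ ball (h i) (r ⟨0, i.pos⟩), compAll N R φ x = Λ := by
  intro N
  induction N with
  | zero => intro _ _ _ _ _ _ _ _ _ i; exact absurd i.isLt (by omega)
  | succ N IH =>
    intro h r hr hr5 R ha hb hc φ i
    set ψ := compAll N (fun j => R j.succ) φ with hψ
    have hcomp : compAll (N + 1) R φ = R 0 ψ := rfl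
    rcases Fin.eq_zero_or_eq_succ i with rfl | ⟨j, rfl⟩
    · obtain ⟨Λ, hΛ⟩ := ha 0 ψ
      exact ⟨Λ, fun x hx => hcomp ▸ hΛ x hx⟩
    · -- apply IH to shifted data
      obtain ⟨Λ, hΛ⟩ := IH (fun k => h k.succ) (fun k => r k.succ)
        (fun k => hr k.succ)
        (by
          intro k hk
          have := hr5 k.succ (by simpa using Nat.succ_lt_succ hk)
          simpa using this)
        (fun k => R k.succ) (fun k => ha k.succ) (fun k => hb k.succ)
        (fun k => hc k.succ) φ j
      -- hΛ : ∀ x ∈ ball (h j.succ) (r (⟨0, j.pos⟩ : Fin N).succ), ψ x = Λ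
      set r0 := r ⟨0, Nat.succ_pos N⟩ with hr0def
      set r1 := r ⟨1, Nat.succ_lt_succ j.pos⟩ with hr1def
      have h5 : 5 * r0 ≤ r1 := hr5 ⟨0, Nat.succ_pos N⟩ (Nat.succ_lt_succ j.pos)
      have hr0pos : 0 < r0 := hr ⟨0, Nat.succ_pos N⟩
      have h01' : r0 ≤ r1 := by nlinarith
      have hΛ' : ∀ x ∈ ball (h j.succ) r1, ψ x = Λ := fun x hx => hΛ x hx
      by_cases hsub : ball (h 0) (2 * r ((0 : Fin (N+1)))) ⊆ ball (h j.succ) r1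
      · have : R 0 ψ = ψ := hc 0 ψ ⟨Λ, fun x hx => hΛ' x (hsub hx)⟩
        refine ⟨Λ, fun x hx => ?_⟩
        rw [hcomp, this]
        exact hΛ' x (ball_subset_ball h01' hx)
      · obtain ⟨y, hy1, hy2⟩ := Set.not_subset.mp hsub
        rw [mem_ball] at hy1
        rw [mem_ball, not_lt] at hy2
        have hzr : r ((0 : Fin (N+1))) = r0 := rfl
        rw [hzr] at hy1
        have hdist : 3 * r0 < dist (h 0) (h j.succ) := by
          have := dist_triangle y (h 0) (h j.succ)
          linarith
        refine ⟨Λ, fun x hx => ?_⟩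
        rw [mem_ball] at hx
        have hfar : 2 * r ((0 : Fin (N+1))) < ‖x - h 0‖ := by
          rw [hzr, ← dist_eq_norm]
          have := dist_triangle (h 0) x (h j.succ)
          rw [dist_comm (h 0) x] at this
          linarith
        rw [hcomp, hb 0 ψ x hfar]
        exact hΛ' x (mem_ball.mpr (lt_of_lt_of_le hx h01'))

/-- Lemma 4.2 of the paper: if each map `R n` (a) produces functions constant on
`B_{r_n}(h_n)`, (b) acts as the identity outside `B_{2 r_n}(h_n)`, and (c) leaves
unchanged any function constant on `B_{2 r_n}(h_n)`, and if `r_{n+1} ≥ 5 r_n`,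
then the composition `R_1 ∘ ⋯ ∘ R_N` applied to any function is constant on each
ball `B_{r_1}(h_i)`. -/
theorem composition_constant_on_balls
    (d m N : ℕ) (hd : 1 ≤ d) (hm : 1 ≤ m) (hN : 1 ≤ N)
    (h : Fin N → EuclideanSpace ℝ (Fin d))
    (r : Fin N → ℝ) (hr : ∀ n, 0 < r n)
    (hr5 : ∀ n : Fin N, ∀ hn : (n : ℕ) + 1 < N, 5 * r n ≤ r ⟨(n : ℕ) + 1, hn⟩)
    (R : Fin N →
      (EuclideanSpace ℝ (Fin d) → EuclideanSpace ℝ (Fin m)) →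
      (EuclideanSpace ℝ (Fin d) → EuclideanSpace ℝ (Fin m)))
    (ha : ∀ (n : Fin N) (φ : EuclideanSpace ℝ (Fin d) → EuclideanSpace ℝ (Fin m)),
      ∃ Λ, ∀ x ∈ ball (h n) (r n), R n φ x = Λ)
    (hb : ∀ (n : Fin N) (φ : EuclideanSpace ℝ (Fin d) → EuclideanSpace ℝ (Fin m))
      (x : EuclideanSpace ℝ (Fin d)), 2 * r n < ‖x - h n‖ → R n φ x = φ x)
    (hc : ∀ (n : Fin N) (φ : EuclideanSpace ℝ (Fin d) → EuclideanSpace ℝ (Fin m)),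
      (∃ v, ∀ x ∈ ball (h n) (2 * r n), φ x = v) → R n φ = φ) :
    ∀ (φ : EuclideanSpace ℝ (Fin d) → EuclideanSpace ℝ (Fin m)) (i : Fin N),
      ∃ Λ : EuclideanSpace ℝ (Fin m),
        ∀ x ∈ ball (h i) (r ⟨0, hN⟩), compAll N R φ x = Λ := by
  exact compAll_aux d m N h r hr hr5 R ha hb hc
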